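/- Let α ≠ 0 be a real constant and t, t₁, t₂, t₃ : ℝ → ℝ be differentiable functions satisfying t_{k+1}'(x) = t_k'(x) + c₄(e^{α t_{k+1}(x)} − e^{α t_k(x)}) + c₅(e^{−α t_{k+1}(x)} − e^{−α t_k(x)}) for k = 0,1,2 (where t₀ = t). Assume the denominators never vanish. Then the cross-ratio F(x) = ((e^{α t(x)} − e^{α t₂(x)})(e^{α t₁(x)} − e^{α t₃(x)})) / ((e^{α t(x)} − e^{α t₃(x)})(e^{α t₁(x)} − e^{α t₂(x)})) is constant, i.e. F'(x) = 0 for all x. -/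

import Mathlib

open Real

theorem stmt_0 (α c₄ c₅ : ℝ) (hα : α ≠ 0)
    (t t₁ t₂ t₃ : ℝ → ℝ)
    (ht : Differentiable ℝ t) (ht₁ : Differentiable ℝ t₁)
    (ht₂ : Differentiable ℝ t₂) (ht₃ : Differentiable ℝ t₃)
    (h₁ : ∀ x, deriv t₁ x = deriv t x + c₄ * (exp (α * t₁ x) - exp (α * t x))
        + c₅ * (exp (-α * t₁ x) - exp (-α * t x)))
    (h₂ : ∀ x, deriv t₂ x = deriv t₁ x + c₄ * (exp (α * t₂ x) - exp (α * t₁ x))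
        + c₅ * (exp (-α * t₂ x) - exp (-α * t₁ x)))
    (h₃ : ∀ x, deriv t₃ x = deriv t₂ x + c₄ * (exp (α * t₃ x) - exp (α * t₂ x))
        + c₅ * (exp (-α * t₃ x) - exp (-α * t₂ x)))
    (hden : ∀ x, (exp (α * t x) - exp (α * t₃ x)) * (exp (α * t₁ x) - exp (α * t₂ x)) ≠ 0) :
    ∀ x, deriv (fun y =>
      ((exp (α * t y) - exp (α * t₂ y)) * (exp (α * t₁ y) - exp (α * t₃ y))) /
      ((exp (α * t y) - exp (α * t₃ y)) * (exp (α * t₁ y) - exp (α * t₂ y)))) x = 0 := by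
  intro x
  have e0 : HasDerivAt (fun y => exp (α * t y)) (exp (α * t x) * (α * deriv t x)) x :=
    ((ht x).hasDerivAt.const_mul α).exp
  have e1 : HasDerivAt (fun y => exp (α * t₁ y)) (exp (α * t₁ x) * (α * deriv t₁ x)) x :=
    ((ht₁ x).hasDerivAt.const_mul α).exp
  have e2 : HasDerivAt (fun y => exp (α * t₂ y)) (exp (α * t₂ x) * (α * deriv t₂ x)) x :=
    ((ht₂ x).hasDerivAt.const_mul α).exp
  have e3 : HasDerivAt (fun y => exp (α * t₃ y)) (exp (α * t₃ x) * (α * deriv t₃ x)) x :=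
    ((ht₃ x).hasDerivAt.const_mul α).exp
  have hN := ((e0.sub e2).mul (e1.sub e3))
  have hD := ((e0.sub e3).mul (e1.sub e2))
  have hF := hN.div hD (hden x)
  erw [hF.deriv]; simp only [Pi.sub_apply, Pi.mul_apply]
  rw [div_eq_zero_iff]
  left
  rw [h₃ x, h₂ x, h₁ x]
  simp only [neg_mul, Real.exp_neg]
  have ha := Real.exp_ne_zero (α * t x)
  have hb := Real.exp_ne_zero (α * t₁ x)
  have hc := Real.exp_ne_zero (α * t₂ x)
  have hd := Real.exp_ne_zero (α * t₃ x)
  set A := exp (α * t x)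
  set B := exp (α * t₁ x)
  set C := exp (α * t₂ x)
  set D := exp (α * t₃ x)
  field_simp
  ring
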